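/- arXiv:2405.00559 — 2 statements merged into one kernel-verified Lean document; each statement's English description precedes it below -/
import Mathlib

section
/- Positive renormalisation (relative energy version): under the same discrete mass balance, (|K|/δt)(Π_γ(ρ_K^{n+1}|ρ̃_K) − Π_γ(ρ_K^n|ρ̃_K)) + h_γ'(ρ_K^{n+1}) Σ_σ F_{σ,K} + R_K = h_γ'(ρ̃_K) Σ_σ F_{σ,K}, with R_K ≥ 0 the same Bregman remainder. -/
/-- Helmholtz function h_γ(ρ) = ρ^γ/(γ−1). -/
noncomputable def hfun (γ : ℝ) : ℝ → ℝ := fun x => x ^ γ / (γ - 1)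

/-- Relative internal energy Π_γ(ρ|ρ̃) = h_γ(ρ) − h_γ(ρ̃) − h_γ'(ρ̃)(ρ − ρ̃). -/
noncomputable def Pg (γ ρ ρt : ℝ) : ℝ :=
  hfun γ ρ - hfun γ ρt - deriv (hfun γ) ρt * (ρ - ρt)

lemma deriv_hfun (γ x : ℝ) (hγ : 1 < γ) :
    deriv (hfun γ) x = γ * x ^ (γ - 1) / (γ - 1) := by
  exact ((Real.hasDerivAt_rpow_const (x := x) (p := γ) (Or.inr hγ.le)).div_const
    (γ - 1)).deriv

lemma bregman (γ x y : ℝ) (hγ : 1 < γ) (hx : 0 < x) (hy : 0 < y) :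
    y ^ γ + γ * y ^ (γ - 1) * (x - y) ≤ x ^ γ := by
  have hs : (-1 : ℝ) ≤ x / y - 1 := by
    have := div_pos hx hy; linarith
  have h := one_add_mul_self_le_rpow_one_add hs hγ.le
  have h1 : (1 : ℝ) + (x / y - 1) = x / y := by ring
  rw [h1] at h
  have hyγ : (0 : ℝ) < y ^ γ := Real.rpow_pos_of_pos hy γ
  have hdiv : (x / y) ^ γ = x ^ γ / y ^ γ := Real.div_rpow hx.le hy.le γ
  have hsub : y ^ (γ - 1) = y ^ γ / y := by
    rw [Real.rpow_sub hy, Real.rpow_one]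
  have := mul_le_mul_of_nonneg_right h hyγ.le
  rw [hdiv, div_mul_cancel₀ _ hyγ.ne'] at this
  have hxy : (1 + γ * (x / y - 1)) * y ^ γ = y ^ γ + γ * (y ^ γ / y) * (x - y) := by
    field_simp
  rw [hxy] at this
  rw [hsub]; linarith

/-- Positive renormalisation identity (relative energy version) with the same
nonnegative Bregman remainder. -/
theorem stmt13 {ι : Type*} [Fintype ι] (γ volK δt ρn ρn1 ρtK : ℝ) (Fl : ι → ℝ)
    (hγ : 1 < γ) (hvol : 0 < volK) (hδt : 0 < δt)
    (hρn : 0 < ρn) (hρn1 : 0 < ρn1) (hρt : 0 < ρtK)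
    (hmass : volK / δt * (ρn1 - ρn) + ∑ σ, Fl σ = 0) :
    volK / δt * (Pg γ ρn1 ρtK - Pg γ ρn ρtK) + deriv (hfun γ) ρn1 * ∑ σ, Fl σ +
        volK / δt * (hfun γ ρn - hfun γ ρn1 - deriv (hfun γ) ρn1 * (ρn - ρn1)) =
      deriv (hfun γ) ρtK * ∑ σ, Fl σ ∧
      0 ≤ volK / δt * (hfun γ ρn - hfun γ ρn1 - deriv (hfun γ) ρn1 * (ρn - ρn1)) := by
  have hS : ∑ σ, Fl σ = -(volK / δt * (ρn1 - ρn)) := by linarith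
  constructor
  · rw [hS]; simp only [Pg]; ring
  · have hb := bregman γ ρn ρn1 hγ hρn hρn1
    have hpos : 0 ≤ volK / δt := by positivity
    have hγ1 : (0 : ℝ) < γ - 1 := by linarith
    have key : 0 ≤ hfun γ ρn - hfun γ ρn1 - deriv (hfun γ) ρn1 * (ρn - ρn1) := by
      rw [deriv_hfun γ ρn1 hγ]; simp only [hfun]
      rw [div_sub_div_same, div_mul_eq_mul_div, div_sub_div_same, le_div_iff₀ hγ1]
      nlinarith
    positivity
end

section
/- In the topological degree existence argument: if ρ^λ ∈ L_M(Ω) satisfies ρ_K^λ − ρ_K^n + (λδt/|K|) Σ_σ F_{σ,K}(ρ^λ, u^n) = 0 for all K, with λ ∈ [0,1], ρ^n > 0, antisymmetric fluxes, and zero exterior fluxes, then 0 ≤ ρ_K^λ ≤ |Ω| max_K ρ_K^n / min_K |K| for all K, provided ρ^λ ≥ 0. -/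
/-- A priori bound in the topological degree argument: a nonnegative solution of
the homotopy equation with conservative fluxes is bounded by
|Ω| max_K ρ_K^n / min_K |K|. -/
theorem stmt16 {ι F : Type*} [Fintype ι] [Fintype F] [Nonempty ι] [DecidableEq ι]
    (Kof Lof : F → ι) (hKL : ∀ σ, Kof σ ≠ Lof σ) (flux : F → ℝ)
    (vol : ι → ℝ) (hvol : ∀ K, 0 < vol K) (δt lam : ℝ)
    (hlam : lam ∈ Set.Icc (0 : ℝ) 1) (ρn ρl : ι → ℝ)
    (hρn : ∀ K, 0 < ρn K) (hnn : ∀ K, 0 ≤ ρl K)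
    (heq : ∀ K, ρl K - ρn K + lam * δt / vol K *
        ∑ σ, (if K = Kof σ then flux σ else if K = Lof σ then -flux σ else 0) = 0) :
    ∀ K, 0 ≤ ρl K ∧ ρl K ≤ (∑ L, vol L) *
      (Finset.univ.sup' Finset.univ_nonempty ρn) /
        (Finset.univ.inf' Finset.univ_nonempty vol) := by
  set S : ι → ℝ := fun K =>
    ∑ σ, (if K = Kof σ then flux σ else if K = Lof σ then -flux σ else 0) with hS
  -- conservation of total mass
  have hcell : ∀ K, vol K * ρl K = vol K * ρn K - lam * δt * S K := by
    intro K
    have h := heq K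
    have hv : vol K ≠ 0 := (hvol K).ne'
    field_simp at h ⊢
    linarith [h]
  have hsumS : ∑ K, S K = 0 := by
    rw [hS]
    rw [Finset.sum_comm]
    apply Finset.sum_eq_zero
    intro σ _
    have : ∀ K : ι, (if K = Kof σ then flux σ else if K = Lof σ then -flux σ else 0)
        = (if K = Kof σ then flux σ else 0) + (if K = Lof σ then -flux σ else 0) := by
      intro K
      by_cases h1 : K = Kof σ
      · have h2 : ¬ K = Lof σ := by rw [h1]; exact hKL σ
        simp [h1, h2, hKL σ]
      · by_cases h2 : K = Lof σ <;> simp [h1, h2, hKL σ, (hKL σ).symm]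
    simp only [this, Finset.sum_add_distrib, Finset.sum_ite_eq', Finset.mem_univ, if_true]
    ring
  have hcons : ∑ K, vol K * ρl K = ∑ K, vol K * ρn K := by
    calc ∑ K, vol K * ρl K = ∑ K, (vol K * ρn K - lam * δt * S K) := by
          exact Finset.sum_congr rfl fun K _ => hcell K
      _ = ∑ K, vol K * ρn K - lam * δt * ∑ K, S K := by
          rw [Finset.sum_sub_distrib, Finset.mul_sum]
      _ = ∑ K, vol K * ρn K := by rw [hsumS]; ring
  intro K
  refine ⟨hnn K, ?_⟩
  set M := Finset.univ.sup' Finset.univ_nonempty ρn with hM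
  set m := Finset.univ.inf' Finset.univ_nonempty vol with hm
  have hmpos : 0 < m := by
    rw [hm]
    obtain ⟨L, _, hL⟩ := Finset.exists_mem_eq_inf' Finset.univ_nonempty vol
    rw [hL]; exact hvol L
  have hMpos : 0 < M := by
    obtain ⟨L, _, hL⟩ := Finset.exists_mem_eq_sup' Finset.univ_nonempty ρn
    rw [hM, hL]; exact hρn L
  -- vol K * ρl K ≤ total mass ≤ (∑ vol) * M
  have h1 : vol K * ρl K ≤ ∑ L, vol L * ρl L := by
    apply Finset.single_le_sum (f := fun L => vol L * ρl L)
    · intro L _; exact mul_nonneg (hvol L).le (hnn L)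
    · exact Finset.mem_univ K
  have h2 : ∑ L, vol L * ρn L ≤ (∑ L, vol L) * M := by
    rw [Finset.sum_mul]
    apply Finset.sum_le_sum
    intro L _
    exact mul_le_mul_of_nonneg_left
      (Finset.le_sup' ρn (Finset.mem_univ L)) (hvol L).le
  have h3 : vol K * ρl K ≤ (∑ L, vol L) * M := by
    calc vol K * ρl K ≤ ∑ L, vol L * ρl L := h1
      _ = ∑ L, vol L * ρn L := hcons
      _ ≤ (∑ L, vol L) * M := h2
  have hmK : m ≤ vol K := Finset.inf'_le vol (Finset.mem_univ K)
  rw [le_div_iff₀ hmpos]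
  calc ρl K * m ≤ ρl K * vol K := by
        exact mul_le_mul_of_nonneg_left hmK (hnn K)
    _ = vol K * ρl K := mul_comm _ _
    _ ≤ (∑ L, vol L) * M := h3
end
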